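/- Let σ be a state on H₁ ⊗ H₂ and {f_k} a measurement on H₁ with g_k = f_k ⊗ Id_{H₂}. Then the sum of the decreasingly ordered spectra of the partial traces Σ_k Sp(Tr_{H₁}(g_k σ g_k*)) majorizes Sp(Tr_{H₁}(σ)): a local measurement by Alice weakly increases Bob's expected local spectrum in the majorization order. -/

import Mathlib

open scoped ComplexOrder

open Matrix Finset in
/-- `u` rearranged in decreasing order. -/
noncomputable def sortDesc {n : ℕ} (u : Fin n → ℝ) : Fin n → ℝ :=
  fun i => u (Tuple.sort u i.rev)

open Finset in
/-- `u` majorizes `v`: every partial sum of the decreasing rearrangement of `u`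
dominates that of `v`, and the total sums agree. -/
noncomputable def Majorizes {n : ℕ} (u v : Fin n → ℝ) : Prop :=
  (∀ k : ℕ, ∑ i ∈ Finset.univ.filter (fun i : Fin n => (i : ℕ) < k), sortDesc v i ≤
      ∑ i ∈ Finset.univ.filter (fun i : Fin n => (i : ℕ) < k), sortDesc u i) ∧
  ∑ i, u i = ∑ i, v i

open Matrix

/-- Partial trace over the first tensor factor. -/
noncomputable def ptraceLeft {n₁ n₂ : ℕ} (M : Matrix (Fin n₁ × Fin n₂) (Fin n₁ × Fin n₂) ℂ) :
    Matrix (Fin n₂) (Fin n₂) ℂ :=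
  Matrix.of fun i j => ∑ k, M (k, i) (k, j)

open Finset

/-! ### Auxiliary lemmas about `sortDesc` -/

lemma sortDesc_antitone {n : ℕ} (u : Fin n → ℝ) : Antitone (sortDesc u) := by
  intro i j hij
  exact Tuple.monotone_sort u (Fin.rev_le_rev.mpr hij)

lemma sum_sortDesc {n : ℕ} (u : Fin n → ℝ) : ∑ i, sortDesc u i = ∑ i, u i :=
  Fintype.sum_equiv ((Fin.revPerm).trans (Tuple.sort u)) _ _ (fun _ => rfl)

lemma sortDesc_eq_self {n : ℕ} {u : Fin n → ℝ} (hu : Antitone u) : sortDesc u = u := by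
  have hmono : Monotone (u ∘ (Fin.revPerm : Equiv.Perm (Fin n))) := by
    intro i j hij
    exact hu (Fin.rev_le_rev.mpr hij)
  have h := Tuple.comp_sort_eq_comp_iff_monotone.mpr hmono
  funext i
  have := congrFun h (Fin.rev i)
  simpa [sortDesc, Fin.rev_rev] using this.symm

/-! ### The scalar rearrangement inequality -/

lemma core_ineq {n K : ℕ} (d b : Fin n → ℝ) (hd : Antitone d)
    (hb0 : ∀ j, 0 ≤ b j) (hb1 : ∀ j, b j ≤ 1)
    (hsum : ∑ j, b j = ((Finset.univ.filter (fun j : Fin n => (j : ℕ) < K)).card : ℝ)) :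
    ∑ j, d j * b j ≤ ∑ j ∈ Finset.univ.filter (fun j : Fin n => (j : ℕ) < K), d j := by
  by_cases hKn : K < n
  · set F := Finset.univ.filter (fun j : Fin n => (j : ℕ) < K) with hF
    have hcard : (F.card : ℝ) = K := by
      rw [hF]
      rw [show (Finset.univ.filter (fun j : Fin n => (j : ℕ) < K)).card = min K n by
        have : (Finset.univ.filter (fun j : Fin n => (j : ℕ) < K)) =
            Finset.attachFin (Finset.range (min K n))
              (fun m hm => lt_of_lt_of_le (Finset.mem_range.mp hm) (min_le_right _ _)) := by
          ext j
          simp only [Finset.mem_filter, Finset.mem_univ, true_and, Finset.mem_attachFin,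
            Finset.mem_range, lt_min_iff]
          exact ⟨fun h => ⟨h, j.isLt⟩, fun h => h.1⟩
        rw [this, Finset.card_attachFin, Finset.card_range]]
      rw [min_eq_left hKn.le]
    set t : ℝ := d ⟨K, hKn⟩ with ht
    have key : ∀ j : Fin n, d j * b j ≤ t * b j + (if (j : ℕ) < K then d j - t else 0) := by
      intro j
      by_cases hj : (j : ℕ) < K
      · have h1 : t ≤ d j := hd (by exact Fin.le_def.mpr (by simpa using hj.le))
        have h2 := hb1 j
        have h3 := hb0 j
        simp only [hj, if_pos]
        nlinarith
      · have h1 : d j ≤ t := hd (by exact Fin.le_def.mpr (by simpa using Nat.le_of_not_lt hj))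
        have h3 := hb0 j
        simp only [hj, if_neg, not_false_iff]
        nlinarith
    calc ∑ j, d j * b j ≤ ∑ j, (t * b j + (if (j : ℕ) < K then d j - t else 0)) :=
          Finset.sum_le_sum (fun j _ => key j)
      _ = t * (∑ j, b j) + ∑ j ∈ F, (d j - t) := by
          rw [Finset.sum_add_distrib, Finset.mul_sum, ← Finset.sum_filter]
      _ = t * F.card + (∑ j ∈ F, d j - F.card * t) := by
          rw [hsum, hcard, Finset.sum_sub_distrib, Finset.sum_const, nsmul_eq_mul, hcard]
      _ = ∑ j ∈ F, d j := by ring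
  · have hF : Finset.univ.filter (fun j : Fin n => (j : ℕ) < K) = Finset.univ := by
      ext j; simp only [Finset.mem_filter, Finset.mem_univ, true_and, iff_true]
      exact lt_of_lt_of_le j.isLt (Nat.le_of_not_lt hKn)
    rw [hF] at hsum ⊢
    have hb : ∀ j, b j = 1 := by
      have hz : ∑ j : Fin n, (1 - b j) = 0 := by
        rw [Finset.sum_sub_distrib, hsum]
        simp
      intro j
      have := (Finset.sum_eq_zero_iff_of_nonneg (fun i _ => by linarith [hb1 i])).mp hz j
        (Finset.mem_univ j)
      linarith
    exact le_of_eq (Finset.sum_congr rfl (fun j _ => by rw [hb j, mul_one]))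

/-! ### Spectral / trace lemmas -/

lemma psd_diag_nonneg {n : ℕ} {M : Matrix (Fin n) (Fin n) ℂ} (hM : M.PosSemidef) (j : Fin n) :
    0 ≤ M j j := by
  exact hM.diag_nonneg

/-- Ky Fan type bound: for Hermitian `A` and `P` with `0 ≤ P ≤ 1` of trace `|{j < K}|`,
`re (tr (P A))` is at most the sum of the `K` largest eigenvalues of `A`. -/
lemma trace_mul_proj_le {n K : ℕ} {A P : Matrix (Fin n) (Fin n) ℂ}
    (hA : A.IsHermitian) (hP : P.PosSemidef) (hP1 : (1 - P).PosSemidef)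
    (hPtr : P.trace = ((Finset.univ.filter (fun j : Fin n => (j : ℕ) < K)).card : ℂ)) :
    (Matrix.trace (P * A)).re ≤
      ∑ i ∈ Finset.univ.filter (fun i : Fin n => (i : ℕ) < K), sortDesc hA.eigenvalues i := by
  set W : Matrix (Fin n) (Fin n) ℂ := (hA.eigenvectorUnitary : Matrix (Fin n) (Fin n) ℂ) with hWdef
  have hW1 : Wᴴ * W = 1 := by
    rw [← Matrix.star_eq_conjTranspose]
    exact (Unitary.mem_iff.mp hA.eigenvectorUnitary.prop).1
  have hW2 : W * Wᴴ = 1 := by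
    rw [← Matrix.star_eq_conjTranspose]
    exact (Unitary.mem_iff.mp hA.eigenvectorUnitary.prop).2
  set D : Matrix (Fin n) (Fin n) ℂ := diagonal (RCLike.ofReal ∘ hA.eigenvalues) with hDdef
  have hspec : A = W * D * Wᴴ := by
    rw [← Matrix.star_eq_conjTranspose]
    exact hA.spectral_theorem
  set Q : Matrix (Fin n) (Fin n) ℂ := Wᴴ * P * W with hQdef
  have hQ : Q.PosSemidef := hP.conjTranspose_mul_mul_same W
  have hQ1 : (1 - Q).PosSemidef := by
    have h := hP1.conjTranspose_mul_mul_same W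
    have : Wᴴ * (1 - P) * W = 1 - Q := by
      rw [Matrix.mul_sub, Matrix.sub_mul, Matrix.mul_one, hW1, hQdef]
    rwa [this] at h
  have htr : Matrix.trace (P * A) = Matrix.trace (Q * D) := by
    rw [hspec, hQdef]
    rw [show P * (W * D * Wᴴ) = (P * W * D) * Wᴴ by noncomm_ring]
    rw [Matrix.trace_mul_comm]
    congr 1
    noncomm_ring
  set c : Fin n → ℝ := fun j => (Q j j).re with hcdef
  have hQjj : ∀ j, Q j j = (c j : ℂ) := by
    intro j
    have h0 := psd_diag_nonneg hQ j
    rw [Complex.le_def] at h0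
    exact Complex.ext rfl h0.2.symm
  have hc0 : ∀ j, 0 ≤ c j := fun j => (Complex.le_def.mp (psd_diag_nonneg hQ j)).1
  have hc1 : ∀ j, c j ≤ 1 := by
    intro j
    have h0 := psd_diag_nonneg hQ1 j
    have h1 : (1 - Q) j j = 1 - Q j j := by simp [Matrix.sub_apply, Matrix.one_apply]
    rw [h1, Complex.le_def] at h0
    have := h0.1
    simp only [Complex.zero_re, Complex.sub_re, Complex.one_re] at this
    linarith
  have htrQ : Matrix.trace Q = Matrix.trace P := by
    rw [hQdef, Matrix.trace_mul_cycle, hW2, Matrix.one_mul]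
  have hsumc : ∑ j, c j = ((Finset.univ.filter (fun j : Fin n => (j : ℕ) < K)).card : ℝ) := by
    have : (Matrix.trace Q).re =
        ((Finset.univ.filter (fun j : Fin n => (j : ℕ) < K)).card : ℝ) := by
      rw [htrQ, hPtr]; simp
    rw [← this, Matrix.trace, Complex.re_sum]
    rfl
  have htrQD : (Matrix.trace (Q * D)).re = ∑ j, hA.eigenvalues j * c j := by
    rw [Matrix.trace, Complex.re_sum]
    apply Finset.sum_congr rfl
    intro j _
    rw [Matrix.diag_apply, Matrix.mul_diagonal, hQjj j]
    simp only [Function.comp_apply]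
    rw [show (RCLike.ofReal (hA.eigenvalues j) : ℂ) = ((hA.eigenvalues j : ℝ) : ℂ) from rfl]
    rw [← Complex.ofReal_mul]
    rw [Complex.ofReal_re]
    ring
  rw [htr, htrQD]
  set e : Equiv.Perm (Fin n) := (Fin.revPerm).trans (Tuple.sort hA.eigenvalues) with hedef
  have hre : ∑ j, hA.eigenvalues j * c j = ∑ i, sortDesc hA.eigenvalues i * (c (e i)) :=
    (Fintype.sum_equiv e _ _ (fun i => rfl)).symm
  rw [hre]
  exact core_ineq (sortDesc hA.eigenvalues) (fun i => c (e i)) (sortDesc_antitone _)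
    (fun i => hc0 _) (fun i => hc1 _)
    (by rw [Fintype.sum_equiv e (fun i => c (e i)) c (fun i => rfl)]; exact hsumc)

lemma sum_eigenvalues_eq_trace {n : ℕ} {C : Matrix (Fin n) (Fin n) ℂ} (hC : C.IsHermitian) :
    ((∑ i, hC.eigenvalues i : ℝ) : ℂ) = C.trace := by
  set W : Matrix (Fin n) (Fin n) ℂ := (hC.eigenvectorUnitary : Matrix (Fin n) (Fin n) ℂ)
  have hW1 : star W * W = 1 := (Unitary.mem_iff.mp hC.eigenvectorUnitary.prop).1
  conv_rhs => rw [hC.spectral_theorem, Unitary.conjStarAlgAut_apply]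
  rw [Matrix.trace_mul_cycle, hW1, Matrix.one_mul, Matrix.trace_diagonal]
  push_cast
  rfl

/-! ### Partial trace lemmas -/

lemma ptraceLeft_sum {n₁ n₂ m : ℕ} (M : Fin m → Matrix (Fin n₁ × Fin n₂) (Fin n₁ × Fin n₂) ℂ) :
    ptraceLeft (∑ k, M k) = ∑ k, ptraceLeft (M k) := by
  ext i j
  simp only [ptraceLeft, of_apply, Matrix.sum_apply]
  rw [Finset.sum_comm]

open Kronecker

lemma kron_one_conjTranspose {n₁ n₂ : ℕ} (X : Matrix (Fin n₁) (Fin n₁) ℂ) :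
    (X ⊗ₖ (1 : Matrix (Fin n₂) (Fin n₂) ℂ))ᴴ = Xᴴ ⊗ₖ (1 : Matrix (Fin n₂) (Fin n₂) ℂ) := by
  ext ⟨a, i⟩ ⟨b, j⟩
  simp only [conjTranspose_apply, kroneckerMap_apply, one_apply, star_mul', star_one, star_zero,
    apply_ite (star : ℂ → ℂ)]
  congr 1
  by_cases h : i = j <;> simp [h, eq_comm]

lemma sum_kron_one {n₁ n₂ m : ℕ} (X : Fin m → Matrix (Fin n₁) (Fin n₁) ℂ) :
    (∑ k, X k) ⊗ₖ (1 : Matrix (Fin n₂) (Fin n₂) ℂ) =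
      ∑ k, (X k ⊗ₖ (1 : Matrix (Fin n₂) (Fin n₂) ℂ)) := by
  ext ⟨a, i⟩ ⟨b, j⟩
  simp [kroneckerMap_apply, Matrix.sum_apply, Finset.sum_mul]

lemma ptraceLeft_kron_comm {n₁ n₂ : ℕ} (X : Matrix (Fin n₁) (Fin n₁) ℂ)
    (M : Matrix (Fin n₁ × Fin n₂) (Fin n₁ × Fin n₂) ℂ) :
    ptraceLeft ((X ⊗ₖ (1 : Matrix (Fin n₂) (Fin n₂) ℂ)) * M) =
      ptraceLeft (M * (X ⊗ₖ (1 : Matrix (Fin n₂) (Fin n₂) ℂ))) := by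
  ext i j
  simp only [ptraceLeft, of_apply, mul_apply, Fintype.sum_prod_type, kroneckerMap_apply,
    one_apply, ite_mul, mul_ite, mul_zero, zero_mul, mul_one, one_mul,
    Finset.sum_ite_eq, Finset.sum_ite_eq', Finset.mem_univ, if_true]
  rw [Finset.sum_comm]
  exact Finset.sum_congr rfl fun a _ => Finset.sum_congr rfl fun b _ => mul_comm _ _

lemma sum_ptrace {n₁ n₂ m : ℕ}
    (σ : Matrix (Fin n₁ × Fin n₂) (Fin n₁ × Fin n₂) ℂ)
    (f : Fin m → Matrix (Fin n₁) (Fin n₁) ℂ)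
    (hpovm : ∑ k, (f k)ᴴ * f k = 1)
    (g : Fin m → Matrix (Fin n₁ × Fin n₂) (Fin n₁ × Fin n₂) ℂ)
    (hg : ∀ k, g k = (f k) ⊗ₖ (1 : Matrix (Fin n₂) (Fin n₂) ℂ)) :
    ∑ k, ptraceLeft (g k * σ * (g k)ᴴ) = ptraceLeft σ := by
  have step : ∀ k, ptraceLeft (g k * σ * (g k)ᴴ) =
      ptraceLeft (σ * ((((f k)ᴴ * f k)) ⊗ₖ (1 : Matrix (Fin n₂) (Fin n₂) ℂ))) := by
    intro k
    rw [hg k, kron_one_conjTranspose, Matrix.mul_assoc, ptraceLeft_kron_comm,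
      Matrix.mul_assoc, ← mul_kronecker_mul, Matrix.one_mul]
  calc ∑ k, ptraceLeft (g k * σ * (g k)ᴴ)
      = ∑ k, ptraceLeft (σ * ((((f k)ᴴ * f k)) ⊗ₖ (1 : Matrix (Fin n₂) (Fin n₂) ℂ))) :=
        Finset.sum_congr rfl fun k _ => step k
    _ = ptraceLeft (∑ k, σ * ((((f k)ᴴ * f k)) ⊗ₖ (1 : Matrix (Fin n₂) (Fin n₂) ℂ))) :=
        (ptraceLeft_sum _).symm
    _ = ptraceLeft σ := by
        rw [← Finset.mul_sum, ← sum_kron_one, hpovm, one_kronecker_one, Matrix.mul_one]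

open Kronecker in
/-- A local measurement by Alice weakly increases Bob's expected local spectrum in the
majorization order: `∑ k, Sp(Tr_{H₁}(g k σ (g k)ᴴ)) ⪰ Sp(Tr_{H₁} σ)`. -/
theorem local_measurement_expected_spectrum_majorizes {n₁ n₂ m : ℕ}
    (σ : Matrix (Fin n₁ × Fin n₂) (Fin n₁ × Fin n₂) ℂ)
    (hσ : σ.PosSemidef) (hσtr : σ.trace = 1)
    (f : Fin m → Matrix (Fin n₁) (Fin n₁) ℂ)
    (hpovm : ∑ k, (f k)ᴴ * f k = 1)
    (g : Fin m → Matrix (Fin n₁ × Fin n₂) (Fin n₁ × Fin n₂) ℂ)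
    (hg : ∀ k, g k = (f k) ⊗ₖ (1 : Matrix (Fin n₂) (Fin n₂) ℂ))
    (hherm : ∀ k, (ptraceLeft (g k * σ * (g k)ᴴ)).IsHermitian)
    (hherm0 : (ptraceLeft σ).IsHermitian) :
    Majorizes (fun i => ∑ k, sortDesc ((hherm k).eigenvalues) i)
      (hherm0.eigenvalues) := by
  classical
  have hBsum : ∑ k, ptraceLeft (g k * σ * (g k)ᴴ) = ptraceLeft σ := sum_ptrace σ f hpovm g hg
  set B : Matrix (Fin n₂) (Fin n₂) ℂ := ptraceLeft σ with hBdef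
  set μ : Fin n₂ → ℝ := hherm0.eigenvalues with hμdef
  set u : Fin n₂ → ℝ := fun i => ∑ k, sortDesc ((hherm k).eigenvalues) i with hudef
  have hu_anti : Antitone u := fun i j hij =>
    Finset.sum_le_sum fun k _ => sortDesc_antitone _ hij
  have hsortu : sortDesc u = u := sortDesc_eq_self hu_anti
  constructor
  · intro K
    set F : Finset (Fin n₂) := Finset.univ.filter (fun i : Fin n₂ => (i : ℕ) < K) with hFdef
    set V : Matrix (Fin n₂) (Fin n₂) ℂ :=
      (hherm0.eigenvectorUnitary : Matrix (Fin n₂) (Fin n₂) ℂ) with hVdef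
    have hV1 : Vᴴ * V = 1 := by
      rw [← Matrix.star_eq_conjTranspose]
      exact (Unitary.mem_iff.mp hherm0.eigenvectorUnitary.prop).1
    have hV2 : V * Vᴴ = 1 := by
      rw [← Matrix.star_eq_conjTranspose]
      exact (Unitary.mem_iff.mp hherm0.eigenvectorUnitary.prop).2
    set e : Equiv.Perm (Fin n₂) := (Fin.revPerm).trans (Tuple.sort μ) with hedef
    set s : Finset (Fin n₂) := F.image e with hsdef
    set E : Matrix (Fin n₂) (Fin n₂) ℂ := diagonal (fun j => if j ∈ s then (1 : ℂ) else 0)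
      with hEdef
    set P : Matrix (Fin n₂) (Fin n₂) ℂ := V * E * Vᴴ with hPdef
    have hE : E.PosSemidef := Matrix.PosSemidef.diagonal
      (by rw [Pi.le_def]; intro j; dsimp only [Pi.zero_apply]; split <;> norm_num)
    have hP : P.PosSemidef := hE.mul_mul_conjTranspose_same V
    have hP1 : (1 - P).PosSemidef := by
      have h1E : (1 : Matrix (Fin n₂) (Fin n₂) ℂ) - E =
          diagonal (fun j => 1 - (if j ∈ s then (1 : ℂ) else 0)) := by
        rw [hEdef, ← Matrix.diagonal_one, Matrix.diagonal_sub]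
      have hE' : ((1 : Matrix (Fin n₂) (Fin n₂) ℂ) - E).PosSemidef := by
        rw [h1E]
        exact Matrix.PosSemidef.diagonal
          (by rw [Pi.le_def]; intro j; dsimp only [Pi.zero_apply]; split <;> norm_num)
      have h := hE'.mul_mul_conjTranspose_same V
      have heq : V * (1 - E) * Vᴴ = 1 - P := by
        rw [Matrix.mul_sub, Matrix.mul_one, Matrix.sub_mul, hV2, hPdef]
      rwa [heq] at h
    have hscard : s.card = F.card := Finset.card_image_of_injective F e.injective
    have htrE : E.trace = (F.card : ℂ) := by
      rw [hEdef, Matrix.trace_diagonal]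
      rw [Finset.sum_ite_mem, Finset.univ_inter, Finset.sum_const, hscard]
      simp
    have hPtr : P.trace = (F.card : ℂ) := by
      rw [hPdef, Matrix.trace_mul_cycle, hV1, Matrix.one_mul, htrE]
    have hDspec : B = V * diagonal (RCLike.ofReal ∘ μ) * Vᴴ := by
      rw [← Matrix.star_eq_conjTranspose]
      exact hherm0.spectral_theorem
    have hPB : Matrix.trace (P * B) = ∑ j ∈ s, ((μ j : ℝ) : ℂ) := by
      have hPBeq : P * B = V * (E * diagonal (RCLike.ofReal ∘ μ)) * Vᴴ := by
        rw [hPdef, hDspec]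
        calc V * E * Vᴴ * (V * diagonal (RCLike.ofReal ∘ μ) * Vᴴ)
            = V * E * ((Vᴴ * V) * (diagonal (RCLike.ofReal ∘ μ) * Vᴴ)) := by noncomm_ring
          _ = V * (E * diagonal (RCLike.ofReal ∘ μ)) * Vᴴ := by
              rw [hV1, Matrix.one_mul]; noncomm_ring
      rw [hPBeq, Matrix.trace_mul_cycle, ← Matrix.mul_assoc, hV1, Matrix.one_mul]
      rw [hEdef, Matrix.diagonal_mul_diagonal, Matrix.trace_diagonal]
      simp only [Function.comp_apply, ite_mul, one_mul, zero_mul]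
      rw [Finset.sum_ite_mem, Finset.univ_inter]
      rfl
    have hval : ∑ i ∈ F, sortDesc μ i = (Matrix.trace (P * B)).re := by
      rw [hPB, Complex.re_sum, hsdef, Finset.sum_image (fun x _ y _ h => e.injective h)]
      apply Finset.sum_congr rfl
      intro i _
      simp [sortDesc, hedef, Complex.ofReal_re]
    have hchain : (Matrix.trace (P * B)).re ≤ ∑ i ∈ F, u i := by
      rw [← hBsum, Finset.mul_sum, Matrix.trace_sum, Complex.re_sum]
      calc ∑ k, (Matrix.trace (P * ptraceLeft (g k * σ * (g k)ᴴ))).re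
          ≤ ∑ k, ∑ i ∈ F, sortDesc ((hherm k).eigenvalues) i :=
            Finset.sum_le_sum fun k _ => trace_mul_proj_le (hherm k) hP hP1 hPtr
        _ = ∑ i ∈ F, u i := by rw [Finset.sum_comm]
    calc ∑ i ∈ F, sortDesc μ i = (Matrix.trace (P * B)).re := hval
      _ ≤ ∑ i ∈ F, u i := hchain
      _ = ∑ i ∈ F, sortDesc u i := by rw [hsortu]
  · have h1 : ((∑ i, u i : ℝ) : ℂ) = B.trace := by
      have : ∑ i, u i = ∑ k, ∑ i, ((hherm k).eigenvalues) i := by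
        rw [hudef]
        rw [Finset.sum_comm]
        exact Finset.sum_congr rfl fun k _ => sum_sortDesc _
      rw [this, Complex.ofReal_sum]
      rw [show ∑ k, ((∑ i, ((hherm k).eigenvalues) i : ℝ) : ℂ)
          = ∑ k, (ptraceLeft (g k * σ * (g k)ᴴ)).trace from
        Finset.sum_congr rfl fun k _ => sum_eigenvalues_eq_trace (hherm k)]
      rw [← Matrix.trace_sum, hBsum]
    have h2 : ((∑ i, μ i : ℝ) : ℂ) = B.trace := sum_eigenvalues_eq_trace hherm0
    have := h1.trans h2.symm
    exact_mod_cast this
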